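/- Hadamard in frame B: On (ℂ²)^{⊗3} with factors A, B, C, let U_{C→B} = SWAP_{B,C} ∘ W_{BA} with W_{BA} = |0⟩⟨0|_B ⊗ 1_A ⊗ 1_C + |1⟩⟨1|_B ⊗ X_A ⊗ 1_C. Then the Hadamard on A transforms as U_{C→B} · (H_A ⊗ 1_B ⊗ 1_C) · U_{C→B}† = |0⟩⟨0|_C ⊗ H_A ⊗ 1_B + |1⟩⟨1|_C ⊗ (X H X)_A ⊗ 1_B; that is, in frame B the local Hadamard becomes a C-controlled single-qubit gate on A whose two branches are related by conjugation with X. -/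

import Mathlib

open Matrix Finset Kronecker

/-- Three-qubit index type: factors labeled A, B, C. -/
abbrev Q3 := Fin 2 × Fin 2 × Fin 2

/-- Pauli X. -/
noncomputable def X : Matrix (Fin 2) (Fin 2) ℂ := !![0, 1; 1, 0]

/-- Pauli Z. -/
noncomputable def Z : Matrix (Fin 2) (Fin 2) ℂ := !![1, 0; 0, -1]

/-- Hadamard gate. -/
noncomputable def Hd : Matrix (Fin 2) (Fin 2) ℂ :=
  (Real.sqrt 2 : ℂ)⁻¹ • !![1, 1; 1, -1]

/-- Projector `|0⟩⟨0|`. -/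
noncomputable def P0 : Matrix (Fin 2) (Fin 2) ℂ := !![1, 0; 0, 0]

/-- Projector `|1⟩⟨1|`. -/
noncomputable def P1 : Matrix (Fin 2) (Fin 2) ℂ := !![0, 0; 0, 1]

/-- Tensor product `A ⊗ B ⊗ C` of three one-qubit operators, as an 8×8 matrix
on `ℂ²⊗ℂ²⊗ℂ²` with factors A, B, C. -/
noncomputable def k3 (P Q T : Matrix (Fin 2) (Fin 2) ℂ) : Matrix Q3 Q3 ℂ :=
  Matrix.of fun a b => P a.1 b.1 * Q a.2.1 b.2.1 * T a.2.2 b.2.2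

/-- `SWAP` of factors A and C. -/
noncomputable def SWAP_AC : Matrix Q3 Q3 ℂ :=
  Matrix.of fun a b => if a.1 = b.2.2 ∧ a.2.1 = b.2.1 ∧ a.2.2 = b.1 then 1 else 0

/-- `SWAP` of factors A and B. -/
noncomputable def SWAP_AB : Matrix Q3 Q3 ℂ :=
  Matrix.of fun a b => if a.1 = b.2.1 ∧ a.2.1 = b.1 ∧ a.2.2 = b.2.2 then 1 else 0

/-- `SWAP` of factors B and C. -/
noncomputable def SWAP_BC : Matrix Q3 Q3 ℂ :=
  Matrix.of fun a b => if a.1 = b.1 ∧ a.2.1 = b.2.2 ∧ a.2.2 = b.2.1 then 1 else 0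

/-- Computational basis vector `|abc⟩ = |a⟩_A ⊗ |b⟩_B ⊗ |c⟩_C`. -/
def ket3 (a b c : Fin 2) : Q3 → ℂ := fun x => if x = (a, b, c) then 1 else 0

/-- `CNOT` with control A and target B (identity on C). -/
noncomputable def CNOT_AB : Matrix Q3 Q3 ℂ := k3 P0 1 1 + k3 P1 X 1

/-- `CNOT` with control A and target C (identity on B). -/
noncomputable def CNOT_AC : Matrix Q3 Q3 ℂ := k3 P0 1 1 + k3 P1 1 X

/-- `CNOT` with control B and target C (identity on A). -/
noncomputable def CNOT_BC : Matrix Q3 Q3 ℂ := k3 1 P0 1 + k3 1 P1 X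

/-- `CNOT` with control C and target B (identity on A). -/
noncomputable def CNOT_CB : Matrix Q3 Q3 ℂ := k3 1 1 P0 + k3 1 X P1

/-- `W_{BA} = |0⟩⟨0|_B ⊗ 1_A ⊗ 1_C + |1⟩⟨1|_B ⊗ X_A ⊗ 1_C`. -/
noncomputable def WBA3 : Matrix Q3 Q3 ℂ := k3 1 P0 1 + k3 X P1 1

/-- The frame-change operator `U_{C→B} = SWAP_{B,C} ∘ W_{BA}`. -/
noncomputable def UCB : Matrix Q3 Q3 ℂ := SWAP_BC * WBA3


lemma k3_mul (P Q T P' Q' T' : Matrix (Fin 2) (Fin 2) ℂ) :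
    k3 P Q T * k3 P' Q' T' = k3 (P * P') (Q * Q') (T * T') := by
  ext ⟨a,b,c⟩ ⟨d,e,f⟩
  simp only [k3, Matrix.mul_apply, Matrix.of_apply, Fintype.sum_prod_type, Fin.sum_univ_two]
  ring

lemma SWAP_BC_mul (M : Matrix Q3 Q3 ℂ) (x y : Q3) :
    (SWAP_BC * M) x y = M (x.1, x.2.2, x.2.1) y := by
  obtain ⟨a,b,c⟩ := x
  simp [SWAP_BC, Matrix.mul_apply, Fintype.sum_prod_type, Fin.sum_univ_two]
  fin_cases a <;> fin_cases b <;> fin_cases c <;> simp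

lemma mul_SWAP_BC (M : Matrix Q3 Q3 ℂ) (x y : Q3) :
    (M * SWAP_BC) x y = M x (y.1, y.2.2, y.2.1) := by
  obtain ⟨d,e,f⟩ := y
  simp [SWAP_BC, Matrix.mul_apply, Fintype.sum_prod_type, Fin.sum_univ_two]
  fin_cases d <;> fin_cases e <;> fin_cases f <;> simp

lemma SWAP_BC_conj (P Q T : Matrix (Fin 2) (Fin 2) ℂ) :
    SWAP_BC * k3 P Q T * SWAP_BC = k3 P T Q := by
  ext x y
  rw [mul_SWAP_BC, SWAP_BC_mul]
  simp only [k3, Matrix.of_apply]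
  ring

lemma WBA3_herm : WBA3ᴴ = WBA3 := by
  ext ⟨a,b,c⟩ ⟨d,e,f⟩
  simp only [WBA3, k3, X, P0, P1, Matrix.conjTranspose_apply, Matrix.add_apply, Matrix.of_apply,
    Matrix.one_apply]
  fin_cases a <;> fin_cases b <;> fin_cases c <;> fin_cases d <;> fin_cases e <;> fin_cases f <;>
    simp

lemma SWAP_BC_herm : SWAP_BCᴴ = SWAP_BC := by
  ext ⟨a,b,c⟩ ⟨d,e,f⟩
  simp only [SWAP_BC, Matrix.conjTranspose_apply, Matrix.of_apply]
  split <;> split <;> simp_all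

/-- Hadamard in frame B:
`U_{C→B} · (H_A ⊗ 1_B ⊗ 1_C) · U_{C→B}† = |0⟩⟨0|_C ⊗ H_A ⊗ 1_B + |1⟩⟨1|_C ⊗ (XHX)_A ⊗ 1_B`;
in frame B the local Hadamard becomes a C-controlled single-qubit gate on A whose two
branches are related by conjugation with X. -/
theorem hadamard_in_frame_B :
    UCB * k3 Hd 1 1 * UCBᴴ = k3 Hd 1 P0 + k3 (X * Hd * X) 1 P1 := by
  have hP01 : P0 * P1 = (0 : Matrix (Fin 2) (Fin 2) ℂ) := by
    simp [P0, P1]; ext i j; fin_cases i <;> fin_cases j <;> simp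
  have hP10 : P1 * P0 = (0 : Matrix (Fin 2) (Fin 2) ℂ) := by
    simp [P0, P1]; ext i j; fin_cases i <;> fin_cases j <;> simp
  have hP00 : P0 * P0 = P0 := by
    ext i j; fin_cases i <;> fin_cases j <;> simp [P0, Matrix.mul_apply, Fin.sum_univ_two]
  have hP11 : P1 * P1 = P1 := by
    ext i j; fin_cases i <;> fin_cases j <;> simp [P1, Matrix.mul_apply, Fin.sum_univ_two]
  have hk0 : ∀ P T : Matrix (Fin 2) (Fin 2) ℂ, k3 P (0:Matrix (Fin 2) (Fin 2) ℂ) T = 0 := by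
    intro P T; ext x y; simp [k3]
  have key : WBA3 * k3 Hd 1 1 * WBA3 = k3 Hd P0 1 + k3 (X * Hd * X) P1 1 := by
    simp only [WBA3, Matrix.add_mul, Matrix.mul_add, k3_mul, Matrix.one_mul, Matrix.mul_one,
      hP01, hP10, hP00, hP11, hk0]
    abel
  calc UCB * k3 Hd 1 1 * UCBᴴ
      = SWAP_BC * (WBA3 * k3 Hd 1 1 * WBA3) * SWAP_BC := by
        simp only [UCB, Matrix.conjTranspose_mul, WBA3_herm, SWAP_BC_herm, Matrix.mul_assoc]
    _ = SWAP_BC * (k3 Hd P0 1 + k3 (X * Hd * X) P1 1) * SWAP_BC := by rw [key]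
    _ = k3 Hd 1 P0 + k3 (X * Hd * X) 1 P1 := by
        rw [Matrix.mul_add, Matrix.add_mul, SWAP_BC_conj, SWAP_BC_conj]
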